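/- Let n, m, k ≥ 1, λ > 0, o ∈ ℝⁿ, D an m×n real matrix, M a k×m real matrix, and g₁, g₂ : ℝᵐ → ℝ convex functions. If H = λIₙ − Dᵀ Mᵀ M D is positive definite and Mᵀ M is positive definite, then the function J̃(x, y) = (λ/2)‖x − o‖₂² − (1/2)‖M D x‖₂² + (1/2)‖M y‖₂² + g₁(D x) + g₂(Mᵀ M (D x − y)) attains its infimum on ℝⁿ × ℝᵐ at exactly one point, i.e. there exists a unique global minimizer (x*, y*) of J̃. -/

import Mathlib

open Matrix

private lemma sum_sq_eq_dot {N : ℕ} (v : Fin N → ℝ) : ∑ i, v i ^ 2 = v ⬝ᵥ v := by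
  simp [dotProduct, sq]

private lemma dot_MtM {k m : ℕ} (M : Matrix (Fin k) (Fin m) ℝ) (v : Fin m → ℝ) :
    v ⬝ᵥ (Mᵀ * M) *ᵥ v = (M *ᵥ v) ⬝ᵥ (M *ᵥ v) := by
  rw [← mulVec_mulVec, dotProduct_mulVec, vecMul_transpose]

private lemma expand_sub_sq {N : ℕ} (a b : Fin N → ℝ) :
    ∑ i, (a i - b i) ^ 2 = (a ⬝ᵥ a) - 2 * (a ⬝ᵥ b) + (b ⬝ᵥ b) := by
  simp only [dotProduct, ← Finset.sum_sub_distrib, ← Finset.sum_add_distrib, Finset.mul_sum]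
  exact Finset.sum_congr rfl fun i _ => by ring

private lemma mid_sq {N : ℕ} (a b : Fin N → ℝ) :
    ∑ i, ((2:ℝ)⁻¹ * (a i + b i)) ^ 2
      = 2⁻¹ * ∑ i, a i ^ 2 + 2⁻¹ * ∑ i, b i ^ 2 - ∑ i, ((2:ℝ)⁻¹ * (a i - b i)) ^ 2 := by
  rw [Finset.mul_sum, Finset.mul_sum, ← Finset.sum_add_distrib, ← Finset.sum_sub_distrib]
  exact Finset.sum_congr rfl fun i _ => by ring

private lemma dot_H {n m k : ℕ} (lam : ℝ) (D : Matrix (Fin m) (Fin n) ℝ)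
    (M : Matrix (Fin k) (Fin m) ℝ) (w : Fin n → ℝ) :
    w ⬝ᵥ ((lam • (1 : Matrix (Fin n) (Fin n) ℝ) - Dᵀ * Mᵀ * M * D) *ᵥ w)
      = lam * (w ⬝ᵥ w) - ((M *ᵥ (D *ᵥ w)) ⬝ᵥ (M *ᵥ (D *ᵥ w))) := by
  rw [sub_mulVec, dotProduct_sub, smul_mulVec, one_mulVec, dotProduct_smul, smul_eq_mul]
  congr 1
  have h1 : Dᵀ * Mᵀ * M * D = Dᵀ * ((Mᵀ * M) * D) := by
    simp [Matrix.mul_assoc]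
  rw [h1, ← mulVec_mulVec, dotProduct_mulVec, vecMul_transpose, ← mulVec_mulVec, dot_MtM]

private lemma mulVec_bound {a b : ℕ} (A : Matrix (Fin a) (Fin b) ℝ) :
    ∃ K ≥ 0, ∀ x : Fin b → ℝ, ‖A *ᵥ x‖ ≤ K * ‖x‖ := by
  let T : (Fin b → ℝ) →L[ℝ] (Fin a → ℝ) := LinearMap.toContinuousLinearMap A.mulVecLin
  refine ⟨‖T‖, norm_nonneg _, fun x => ?_⟩
  simpa [T, Matrix.mulVecLin_apply] using T.le_opNorm x

private lemma posdef_lower {N : ℕ} (hN : 0 < N) (A : Matrix (Fin N) (Fin N) ℝ)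
    (hA : A.PosDef) : ∃ c > 0, ∀ x : Fin N → ℝ, c * ‖x‖ ^ 2 ≤ x ⬝ᵥ A *ᵥ x := by
  haveI : Nonempty (Fin N) := ⟨⟨0, hN⟩⟩
  have hQc : Continuous fun x : Fin N → ℝ => x ⬝ᵥ A *ᵥ x :=
    continuous_id.dotProduct (Continuous.matrix_mulVec continuous_const continuous_id)
  have hsn : (Metric.sphere (0 : Fin N → ℝ) 1).Nonempty :=
    NormedSpace.sphere_nonempty.mpr zero_le_one
  obtain ⟨x₀, hx₀S, hx₀min⟩ :=
    (isCompact_sphere (0 : Fin N → ℝ) 1).exists_isMinOn hsn hQc.continuousOn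
  have hx₀ : x₀ ≠ 0 := by
    intro h
    rw [mem_sphere_zero_iff_norm, h, norm_zero] at hx₀S
    norm_num at hx₀S
  have hc : 0 < x₀ ⬝ᵥ A *ᵥ x₀ := by simpa using hA.dotProduct_mulVec_pos hx₀
  refine ⟨_, hc, fun x => ?_⟩
  rcases eq_or_ne x 0 with rfl | hx
  · simp
  · have hr : 0 < ‖x‖ := norm_pos_iff.mpr hx
    set u := ‖x‖⁻¹ • x with hu
    have huS : u ∈ Metric.sphere (0 : Fin N → ℝ) 1 := by
      rw [mem_sphere_zero_iff_norm, hu, norm_smul, norm_inv, norm_norm,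
        inv_mul_cancel₀ hr.ne']
    have hx_eq : x = ‖x‖ • u := by
      rw [hu, smul_smul, mul_inv_cancel₀ hr.ne', one_smul]
    have hQx : x ⬝ᵥ A *ᵥ x = ‖x‖ ^ 2 * ((u ⬝ᵥ (A *ᵥ u))) := by
      conv_lhs => rw [hx_eq]
      rw [mulVec_smul, dotProduct_smul, smul_dotProduct]
      simp [smul_eq_mul]; ring
    have hmin : (x₀ ⬝ᵥ (A *ᵥ x₀)) ≤ (u ⬝ᵥ (A *ᵥ u)) := hx₀min huS
    rw [hQx]
    nlinarith [sq_nonneg ‖x‖]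

private lemma convex_lower {m : ℕ} {g : (Fin m → ℝ) → ℝ} (hg : ConvexOn ℝ Set.univ g) :
    ∃ C ≥ 0, ∀ z : Fin m → ℝ, -(C * (1 + ‖z‖)) ≤ g z := by
  have hgc : Continuous g := hg.locallyLipschitz.continuous
  obtain ⟨B, hB⟩ := (isCompact_closedBall (0 : Fin m → ℝ) 1).exists_bound_of_continuousOn
    hgc.continuousOn
  have h00 := hB 0 (Metric.mem_closedBall_self zero_le_one)
  have hB0 : 0 ≤ B := le_trans (norm_nonneg _) h00
  have h00' := h00
  rw [Real.norm_eq_abs] at h00'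
  have h0 := abs_le.mp h00'
  refine ⟨2 * B, by linarith, fun z => ?_⟩
  rcases le_or_gt ‖z‖ 1 with hz | hz
  · have hmem : z ∈ Metric.closedBall (0 : Fin m → ℝ) 1 := by
      simpa [Metric.mem_closedBall, dist_zero_right] using hz
    have h1' := hB z hmem
    rw [Real.norm_eq_abs] at h1'
    have h1 := abs_le.mp h1'
    nlinarith [norm_nonneg z]
  · have hz0 : 0 < ‖z‖ := lt_trans one_pos hz
    set t := ‖z‖⁻¹ with ht
    have ht0 : 0 < t := inv_pos.mpr hz0
    have htz : t * ‖z‖ = 1 := inv_mul_cancel₀ hz0.ne'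
    have ht1 : t ≤ 1 := by nlinarith
    have hconv := hg.2 (Set.mem_univ z) (Set.mem_univ (0 : Fin m → ℝ)) ht0.le
      (by linarith : (0:ℝ) ≤ 1 - t) (by ring)
    rw [smul_zero, add_zero] at hconv
    have hu_mem : t • z ∈ Metric.closedBall (0 : Fin m → ℝ) 1 := by
      simp [Metric.mem_closedBall, dist_zero_right, norm_smul, abs_of_pos ht0, htz.le]
    have h2' := hB _ hu_mem
    rw [Real.norm_eq_abs] at h2'
    have h2 := abs_le.mp h2'
    simp only [smul_eq_mul] at hconv
    have key : -((2 - t) * B) ≤ t * g z := by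
      nlinarith [h2.1, h0.2, hconv,
        mul_nonneg (by linarith : (0:ℝ) ≤ 1 - t) (by linarith [h0.2] : 0 ≤ B - g 0)]
    have h3 : ‖z‖ * (-((2 - t) * B)) ≤ ‖z‖ * (t * g z) :=
      mul_le_mul_of_nonneg_left key hz0.le
    have h4 : ‖z‖ * (t * g z) = g z := by
      rw [← mul_assoc, mul_comm ‖z‖ t, htz, one_mul]
    nlinarith [h3, h4, htz, hB0]

set_option maxHeartbeats 1000000 in
theorem stmt19 (n m k : ℕ) (hn : 1 ≤ n) (hm : 1 ≤ m) (hk : 1 ≤ k)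
    (lam : ℝ) (hlam : 0 < lam) (o : Fin n → ℝ)
    (D : Matrix (Fin m) (Fin n) ℝ) (M : Matrix (Fin k) (Fin m) ℝ)
    (g₁ g₂ : (Fin m → ℝ) → ℝ)
    (hg₁ : ConvexOn ℝ Set.univ g₁) (hg₂ : ConvexOn ℝ Set.univ g₂)
    (hH : (lam • (1 : Matrix (Fin n) (Fin n) ℝ) - Dᵀ * Mᵀ * M * D).PosDef)
    (hM : (Mᵀ * M).PosDef) :
    ∃! p : (Fin n → ℝ) × (Fin m → ℝ),
      ∀ q : (Fin n → ℝ) × (Fin m → ℝ),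
        (lam / 2 * ∑ i, (p.1 i - o i) ^ 2 - 1 / 2 * ∑ j, M.mulVec (D.mulVec p.1) j ^ 2
          + 1 / 2 * ∑ j, M.mulVec p.2 j ^ 2 + g₁ (D.mulVec p.1)
          + g₂ ((Mᵀ * M).mulVec (D.mulVec p.1 - p.2)))
        ≤ (lam / 2 * ∑ i, (q.1 i - o i) ^ 2 - 1 / 2 * ∑ j, M.mulVec (D.mulVec q.1) j ^ 2
          + 1 / 2 * ∑ j, M.mulVec q.2 j ^ 2 + g₁ (D.mulVec q.1)
          + g₂ ((Mᵀ * M).mulVec (D.mulVec q.1 - q.2))) := by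
  classical
  set F : (Fin n → ℝ) × (Fin m → ℝ) → ℝ := fun q =>
    lam / 2 * ∑ i, (q.1 i - o i) ^ 2 - 1 / 2 * ∑ j, M.mulVec (D.mulVec q.1) j ^ 2
      + 1 / 2 * ∑ j, M.mulVec q.2 j ^ 2 + g₁ (D.mulVec q.1)
      + g₂ ((Mᵀ * M).mulVec (D.mulVec q.1 - q.2)) with hFdef
  show ∃! p, ∀ q, F p ≤ F q
  -- continuity
  have hg₁c : Continuous g₁ := hg₁.locallyLipschitz.continuous
  have hg₂c : Continuous g₂ := hg₂.locallyLipschitz.continuous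
  have hDxc : Continuous fun q : (Fin n → ℝ) × (Fin m → ℝ) => D *ᵥ q.1 :=
    Continuous.matrix_mulVec continuous_const continuous_fst
  have hFc : Continuous F := by
    refine Continuous.add (Continuous.add (Continuous.add (Continuous.sub ?_ ?_) ?_) ?_) ?_
    · exact continuous_const.mul (continuous_finset_sum _ fun i _ =>
        (((continuous_apply i).comp continuous_fst).sub continuous_const).pow 2)
    · exact continuous_const.mul (continuous_finset_sum _ fun j _ =>
        ((continuous_apply j).comp (Continuous.matrix_mulVec continuous_const hDxc)).pow 2)
    · exact continuous_const.mul (continuous_finset_sum _ fun j _ =>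
        ((continuous_apply j).comp (Continuous.matrix_mulVec continuous_const continuous_snd)).pow 2)
    · exact hg₁c.comp hDxc
    · exact hg₂c.comp (Continuous.matrix_mulVec continuous_const (hDxc.sub continuous_snd))
  -- constants
  obtain ⟨cH, hcH, hHle⟩ := posdef_lower hn _ hH
  obtain ⟨cM, hcM, hMle⟩ := posdef_lower hm _ hM
  obtain ⟨C₁, hC₁, hg₁lb⟩ := convex_lower hg₁
  obtain ⟨C₂, hC₂, hg₂lb⟩ := convex_lower hg₂
  obtain ⟨KD, hKD, hKDle⟩ := mulVec_bound D
  obtain ⟨KA, hKA, hKAle⟩ := mulVec_bound (Mᵀ * M)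
  set So : ℝ := ∑ i, |o i| with hSodef
  have hSo0 : 0 ≤ So := Finset.sum_nonneg fun i _ => abs_nonneg _
  have hodot : ∀ x : Fin n → ℝ, |x ⬝ᵥ o| ≤ ‖x‖ * So := by
    intro x
    have h1 : x ⬝ᵥ o = ∑ i, x i * o i := rfl
    rw [h1, hSodef, Finset.mul_sum]
    refine le_trans (Finset.abs_sum_le_sum_abs _ _) (Finset.sum_le_sum fun i _ => ?_)
    rw [abs_mul]
    exact mul_le_mul_of_nonneg_right (by simpa using norm_le_pi_norm x i) (abs_nonneg _)
  -- quadratic-form expression of F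
  have hFeq : ∀ q : (Fin n → ℝ) × (Fin m → ℝ), F q =
      1 / 2 * (q.1 ⬝ᵥ ((lam • (1 : Matrix (Fin n) (Fin n) ℝ) - Dᵀ * Mᵀ * M * D) *ᵥ q.1))
        + 1 / 2 * (q.2 ⬝ᵥ ((Mᵀ * M) *ᵥ q.2))
        - lam * (q.1 ⬝ᵥ o) + lam / 2 * (o ⬝ᵥ o)
        + g₁ (D *ᵥ q.1) + g₂ ((Mᵀ * M) *ᵥ (D *ᵥ q.1 - q.2)) := by
    intro q
    rw [hFdef]
    simp only
    rw [dot_H, expand_sub_sq, sum_sq_eq_dot (M *ᵥ (D *ᵥ q.1)), sum_sq_eq_dot (M *ᵥ q.2),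
      dot_MtM]
    ring
  -- coercivity
  set c2 : ℝ := min cH cM / 2 with hc2def
  set KK : ℝ := lam * So + C₁ * KD + C₂ * (KA * KD) + C₂ * KA with hKKdef
  have hc2 : 0 < c2 := by
    have := lt_min hcH hcM
    rw [hc2def]; linarith
  have hbound : ∀ q : (Fin n → ℝ) × (Fin m → ℝ),
      c2 * ‖q‖ ^ 2 - KK * ‖q‖ - (C₁ + C₂) ≤ F q := by
    rintro ⟨x, y⟩
    rw [hFeq]
    simp only
    have h1 := hHle x
    have h2 := hMle y
    have l0 : lam * (x ⬝ᵥ o) ≤ lam * (‖x‖ * So) :=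
      mul_le_mul_of_nonneg_left (le_of_abs_le (hodot x)) hlam.le
    have h4 := hg₁lb (D *ᵥ x)
    have h5 := hg₂lb ((Mᵀ * M) *ᵥ (D *ᵥ x - y))
    have h4' : ‖D *ᵥ x‖ ≤ KD * ‖x‖ := hKDle x
    have h5' : ‖(Mᵀ * M) *ᵥ (D *ᵥ x - y)‖ ≤ KA * (KD * ‖x‖ + ‖y‖) := by
      refine le_trans (hKAle _) (mul_le_mul_of_nonneg_left ?_ hKA)
      exact le_trans (norm_sub_le _ _) (by linarith)
    have l5 : C₁ * (1 + ‖D *ᵥ x‖) ≤ C₁ * (1 + KD * ‖x‖) :=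
      mul_le_mul_of_nonneg_left (by linarith) hC₁
    have l6 : C₂ * (1 + ‖(Mᵀ * M) *ᵥ (D *ᵥ x - y)‖) ≤ C₂ * (1 + KA * (KD * ‖x‖ + ‖y‖)) :=
      mul_le_mul_of_nonneg_left (by linarith) hC₂
    have h6 : 0 ≤ o ⬝ᵥ o := Finset.sum_nonneg fun i _ => mul_self_nonneg _
    have l7 : 0 ≤ lam / 2 * (o ⬝ᵥ o) := by positivity
    have hnp : ‖((x, y) : (Fin n → ℝ) × (Fin m → ℝ))‖ = max ‖x‖ ‖y‖ := rfl
    have hxp : ‖x‖ ≤ max ‖x‖ ‖y‖ := le_max_left _ _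
    have hyp : ‖y‖ ≤ max ‖x‖ ‖y‖ := le_max_right _ _
    have hx0 : (0:ℝ) ≤ ‖x‖ := norm_nonneg _
    have hy0 : (0:ℝ) ≤ ‖y‖ := norm_nonneg _
    have hq1 : c2 * (max ‖x‖ ‖y‖) ^ 2 ≤ cH / 2 * ‖x‖ ^ 2 + cM / 2 * ‖y‖ ^ 2 := by
      have hminH : min cH cM ≤ cH := min_le_left _ _
      have hminM : min cH cM ≤ cM := min_le_right _ _
      rcases max_cases ‖x‖ ‖y‖ with ⟨he, _⟩ | ⟨he, _⟩ <;> rw [he, hc2def] <;>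
        nlinarith [mul_nonneg (sub_nonneg.mpr hminH) (sq_nonneg ‖x‖),
          mul_nonneg (sub_nonneg.mpr hminM) (sq_nonneg ‖y‖),
          mul_nonneg hcH.le (sq_nonneg ‖x‖), mul_nonneg hcM.le (sq_nonneg ‖y‖)]
    have lin1 : lam * So * ‖x‖ ≤ lam * So * max ‖x‖ ‖y‖ :=
      mul_le_mul_of_nonneg_left hxp (by positivity)
    have lin2 : C₁ * KD * ‖x‖ ≤ C₁ * KD * max ‖x‖ ‖y‖ :=
      mul_le_mul_of_nonneg_left hxp (by positivity)
    have lin3 : C₂ * (KA * KD) * ‖x‖ ≤ C₂ * (KA * KD) * max ‖x‖ ‖y‖ :=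
      mul_le_mul_of_nonneg_left hxp (by positivity)
    have lin4 : C₂ * KA * ‖y‖ ≤ C₂ * KA * max ‖x‖ ‖y‖ :=
      mul_le_mul_of_nonneg_left hyp (by positivity)
    rw [hnp, hKKdef]
    linarith [h1, h2, l0, h4, h5, l5, l6, l7, hq1, lin1, lin2, lin3, lin4]
  have hphi : Filter.Tendsto (fun t : ℝ => c2 * t ^ 2 - KK * t - (C₁ + C₂))
      Filter.atTop Filter.atTop := by
    have h1 : Filter.Tendsto (fun t : ℝ => c2 * t - KK) Filter.atTop Filter.atTop :=
      Filter.tendsto_atTop_add_const_right _ _ (Filter.Tendsto.const_mul_atTop hc2 Filter.tendsto_id)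
    have h2 : Filter.Tendsto (fun t : ℝ => t * (c2 * t - KK)) Filter.atTop Filter.atTop :=
      Filter.Tendsto.atTop_mul_atTop₀ Filter.tendsto_id h1
    have h3 := Filter.tendsto_atTop_add_const_right Filter.atTop (-(C₁ + C₂)) h2
    refine h3.congr fun t => by ring
  have hcoer : Filter.Tendsto F (Filter.cocompact _) Filter.atTop :=
    Filter.tendsto_atTop_mono hbound (hphi.comp tendsto_norm_cocompact_atTop)
  obtain ⟨p, hp⟩ := hFc.exists_forall_le hcoer
  refine ⟨p, hp, fun p' hp' => ?_⟩
  by_contra hne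
  have hFp : F p' = F p := le_antisymm (hp' p) (hp p')
  set xm : Fin n → ℝ := (2:ℝ)⁻¹ • (p'.1 + p.1) with hxm
  set ym : Fin m → ℝ := (2:ℝ)⁻¹ • (p'.2 + p.2) with hym
  have hDxm : D *ᵥ xm = (2:ℝ)⁻¹ • (D *ᵥ p'.1) + (2:ℝ)⁻¹ • (D *ᵥ p.1) := by
    rw [hxm, mulVec_smul, mulVec_add, smul_add]
  have hMDxm : M *ᵥ (D *ᵥ xm)
      = (2:ℝ)⁻¹ • (M *ᵥ (D *ᵥ p'.1)) + (2:ℝ)⁻¹ • (M *ᵥ (D *ᵥ p.1)) := by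
    rw [hDxm, mulVec_add, mulVec_smul, mulVec_smul]
  have hMym : M *ᵥ ym = (2:ℝ)⁻¹ • (M *ᵥ p'.2) + (2:ℝ)⁻¹ • (M *ᵥ p.2) := by
    rw [hym, mulVec_smul, mulVec_add, smul_add]
  have hsub : D *ᵥ xm - ym
      = (2:ℝ)⁻¹ • (D *ᵥ p'.1 - p'.2) + (2:ℝ)⁻¹ • (D *ᵥ p.1 - p.2) := by
    rw [hDxm, hym]; module
  have eA : ∑ i, (xm i - o i) ^ 2
      = 2⁻¹ * ∑ i, (p'.1 i - o i) ^ 2 + 2⁻¹ * ∑ i, (p.1 i - o i) ^ 2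
        - ∑ i, ((2:ℝ)⁻¹ * (p'.1 i - p.1 i)) ^ 2 := by
    have h1 : ∑ i, (xm i - o i) ^ 2
        = ∑ i, ((2:ℝ)⁻¹ * ((p'.1 i - o i) + (p.1 i - o i))) ^ 2 :=
      Finset.sum_congr rfl fun i _ => by
        rw [hxm]; simp only [Pi.smul_apply, Pi.add_apply, smul_eq_mul]; ring
    have h2 : ∑ i, ((2:ℝ)⁻¹ * ((p'.1 i - o i) - (p.1 i - o i))) ^ 2
        = ∑ i, ((2:ℝ)⁻¹ * (p'.1 i - p.1 i)) ^ 2 :=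
      Finset.sum_congr rfl fun i _ => by ring
    rw [h1, mid_sq, h2]
  have eB : ∑ j, (M *ᵥ (D *ᵥ xm)) j ^ 2
      = 2⁻¹ * ∑ j, (M *ᵥ (D *ᵥ p'.1)) j ^ 2 + 2⁻¹ * ∑ j, (M *ᵥ (D *ᵥ p.1)) j ^ 2
        - ∑ j, ((2:ℝ)⁻¹ * ((M *ᵥ (D *ᵥ p'.1)) j - (M *ᵥ (D *ᵥ p.1)) j)) ^ 2 := by
    have h1 : ∑ j, (M *ᵥ (D *ᵥ xm)) j ^ 2
        = ∑ j, ((2:ℝ)⁻¹ * ((M *ᵥ (D *ᵥ p'.1)) j + (M *ᵥ (D *ᵥ p.1)) j)) ^ 2 :=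
      Finset.sum_congr rfl fun j _ => by
        rw [hMDxm]; simp only [Pi.smul_apply, Pi.add_apply, smul_eq_mul]; ring
    rw [h1, mid_sq]
  have eC : ∑ j, (M *ᵥ ym) j ^ 2
      = 2⁻¹ * ∑ j, (M *ᵥ p'.2) j ^ 2 + 2⁻¹ * ∑ j, (M *ᵥ p.2) j ^ 2
        - ∑ j, ((2:ℝ)⁻¹ * ((M *ᵥ p'.2) j - (M *ᵥ p.2) j)) ^ 2 := by
    have h1 : ∑ j, (M *ᵥ ym) j ^ 2
        = ∑ j, ((2:ℝ)⁻¹ * ((M *ᵥ p'.2) j + (M *ᵥ p.2) j)) ^ 2 :=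
      Finset.sum_congr rfl fun j _ => by
        rw [hMym]; simp only [Pi.smul_apply, Pi.add_apply, smul_eq_mul]; ring
    rw [h1, mid_sq]
  have hcg₁ : g₁ (D *ᵥ xm) ≤ 2⁻¹ * g₁ (D *ᵥ p'.1) + 2⁻¹ * g₁ (D *ᵥ p.1) := by
    have h := hg₁.2 (Set.mem_univ (D *ᵥ p'.1)) (Set.mem_univ (D *ᵥ p.1))
      (by norm_num : (0:ℝ) ≤ 2⁻¹) (by norm_num : (0:ℝ) ≤ 2⁻¹) (by norm_num : (2:ℝ)⁻¹ + 2⁻¹ = 1)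
    rw [hDxm]
    simpa [smul_eq_mul] using h
  have hcg₂ : g₂ ((Mᵀ * M) *ᵥ (D *ᵥ xm - ym))
      ≤ 2⁻¹ * g₂ ((Mᵀ * M) *ᵥ (D *ᵥ p'.1 - p'.2)) + 2⁻¹ * g₂ ((Mᵀ * M) *ᵥ (D *ᵥ p.1 - p.2)) := by
    have harg : (Mᵀ * M) *ᵥ (D *ᵥ xm - ym)
        = (2:ℝ)⁻¹ • ((Mᵀ * M) *ᵥ (D *ᵥ p'.1 - p'.2))
          + (2:ℝ)⁻¹ • ((Mᵀ * M) *ᵥ (D *ᵥ p.1 - p.2)) := by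
      rw [hsub, mulVec_add, mulVec_smul, mulVec_smul]
    have h := hg₂.2 (Set.mem_univ ((Mᵀ * M) *ᵥ (D *ᵥ p'.1 - p'.2)))
      (Set.mem_univ ((Mᵀ * M) *ᵥ (D *ᵥ p.1 - p.2)))
      (by norm_num : (0:ℝ) ≤ 2⁻¹) (by norm_num : (0:ℝ) ≤ 2⁻¹) (by norm_num : (2:ℝ)⁻¹ + 2⁻¹ = 1)
    rw [harg]
    simpa [smul_eq_mul] using h
  set w : Fin n → ℝ := (2:ℝ)⁻¹ • (p'.1 - p.1) with hw
  set v : Fin m → ℝ := (2:ℝ)⁻¹ • (p'.2 - p.2) with hv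
  have ew : ∑ i, ((2:ℝ)⁻¹ * (p'.1 i - p.1 i)) ^ 2 = w ⬝ᵥ w := by
    rw [← sum_sq_eq_dot]
    exact Finset.sum_congr rfl fun i _ => by
      rw [hw]; simp only [Pi.smul_apply, Pi.sub_apply, smul_eq_mul]
  have hMDw : M *ᵥ (D *ᵥ w) = (2:ℝ)⁻¹ • (M *ᵥ (D *ᵥ p'.1) - M *ᵥ (D *ᵥ p.1)) := by
    rw [hw, mulVec_smul, mulVec_sub, mulVec_smul, mulVec_sub]
  have eMDw : ∑ j, ((2:ℝ)⁻¹ * ((M *ᵥ (D *ᵥ p'.1)) j - (M *ᵥ (D *ᵥ p.1)) j)) ^ 2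
      = (M *ᵥ (D *ᵥ w)) ⬝ᵥ (M *ᵥ (D *ᵥ w)) := by
    rw [← sum_sq_eq_dot]
    exact Finset.sum_congr rfl fun j _ => by
      rw [hMDw]; simp only [Pi.smul_apply, Pi.sub_apply, smul_eq_mul]
  have hMv : M *ᵥ v = (2:ℝ)⁻¹ • (M *ᵥ p'.2 - M *ᵥ p.2) := by
    rw [hv, mulVec_smul, mulVec_sub]
  have eMv : ∑ j, ((2:ℝ)⁻¹ * ((M *ᵥ p'.2) j - (M *ᵥ p.2) j)) ^ 2
      = (M *ᵥ v) ⬝ᵥ (M *ᵥ v) := by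
    rw [← sum_sq_eq_dot]
    exact Finset.sum_congr rfl fun j _ => by
      rw [hMv]; simp only [Pi.smul_apply, Pi.sub_apply, smul_eq_mul]
  set dv : ℝ := lam / 2 * (w ⬝ᵥ w)
      - 1 / 2 * ((M *ᵥ (D *ᵥ w)) ⬝ᵥ (M *ᵥ (D *ᵥ w))) + 1 / 2 * ((M *ᵥ v) ⬝ᵥ (M *ᵥ v)) with hdv
  have hdelta : 0 < dv := by
    rw [hdv]
    have hHw := dot_H lam D M w
    have hAv := dot_MtM M v
    have hwv : w ≠ 0 ∨ v ≠ 0 := by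
      by_contra hc
      push_neg at hc
      obtain ⟨hc1, hc2⟩ := hc
      apply hne
      rw [hw] at hc1
      rw [hv] at hc2
      have e1 : p'.1 = p.1 := by
        rcases smul_eq_zero.mp hc1 with h | h
        · norm_num at h
        · exact sub_eq_zero.mp h
      have e2 : p'.2 = p.2 := by
        rcases smul_eq_zero.mp hc2 with h | h
        · norm_num at h
        · exact sub_eq_zero.mp h
      exact Prod.ext e1 e2
    have hAvnn : 0 ≤ v ⬝ᵥ ((Mᵀ * M) *ᵥ v) := by simpa using hM.posSemidef.dotProduct_mulVec_nonneg v
    have hHwnn : 0 ≤ w ⬝ᵥ ((lam • (1 : Matrix (Fin n) (Fin n) ℝ) - Dᵀ * Mᵀ * M * D) *ᵥ w) := by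
      simpa using hH.posSemidef.dotProduct_mulVec_nonneg w
    rcases hwv with hw0 | hv0
    · have hpos : 0 < w ⬝ᵥ ((lam • (1 : Matrix (Fin n) (Fin n) ℝ) - Dᵀ * Mᵀ * M * D) *ᵥ w) := by
        simpa using hH.dotProduct_mulVec_pos hw0
      linarith [hpos, hAvnn, hHw, hAv]
    · have hpos : 0 < v ⬝ᵥ ((Mᵀ * M) *ᵥ v) := by simpa using hM.dotProduct_mulVec_pos hv0
      linarith [hpos, hHwnn, hHw, hAv]
  have key : F (xm, ym) ≤ 2⁻¹ * F p' + 2⁻¹ * F p - dv := by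
    rw [hdv]
    have hFmid : F (xm, ym)
        = lam / 2 * ∑ i, (xm i - o i) ^ 2 - 1 / 2 * ∑ j, (M *ᵥ (D *ᵥ xm)) j ^ 2
          + 1 / 2 * ∑ j, (M *ᵥ ym) j ^ 2 + g₁ (D *ᵥ xm)
          + g₂ ((Mᵀ * M) *ᵥ (D *ᵥ xm - ym)) := by rw [hFdef]
    have hFp' : F p'
        = lam / 2 * ∑ i, (p'.1 i - o i) ^ 2 - 1 / 2 * ∑ j, (M *ᵥ (D *ᵥ p'.1)) j ^ 2
          + 1 / 2 * ∑ j, (M *ᵥ p'.2) j ^ 2 + g₁ (D *ᵥ p'.1)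
          + g₂ ((Mᵀ * M) *ᵥ (D *ᵥ p'.1 - p'.2)) := by rw [hFdef]
    have hFpp : F p
        = lam / 2 * ∑ i, (p.1 i - o i) ^ 2 - 1 / 2 * ∑ j, (M *ᵥ (D *ᵥ p.1)) j ^ 2
          + 1 / 2 * ∑ j, (M *ᵥ p.2) j ^ 2 + g₁ (D *ᵥ p.1)
          + g₂ ((Mᵀ * M) *ᵥ (D *ᵥ p.1 - p.2)) := by rw [hFdef]
    rw [hFmid, hFp', hFpp, eA, eB, eC, ew, eMDw, eMv]
    linarith [hcg₁, hcg₂]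
  have hlow := hp (xm, ym)
  clear_value dv F xm ym w v
  linarith [hdelta, hFp, key, hlow]
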